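/- arXiv:1910.00319 — 3 statements merged into one kernel-verified Lean document; each statement's English description precedes it below -/
import Mathlib

section
/- The map Φ sending (I₃ + ε Ω_t)·R ∈ SO(3, R[ε]) to the rigid motion x ↦ R x + t in SE(3,ℝ) is a group isomorphism. -/
open DualNumber Matrix

/-- Skew-symmetric matrix of the cross product `x ↦ t × x`. -/
def Omega (t : Fin 3 → ℝ) : Matrix (Fin 3) (Fin 3) ℝ :=
  !![0, -t 2, t 1; t 2, 0, -t 0; -t 1, t 0, 0]

/-- The vector `t` such that a skew-symmetric matrix `N` equals `Ω_t`. -/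
def vecOf (N : Matrix (Fin 3) (Fin 3) ℝ) : Fin 3 → ℝ :=
  ![N 2 1, N 0 2, N 1 0]

/-- `SO(3, ℝ[ε])` as a subset of matrices over the dual numbers. -/
def SO3Dual : Set (Matrix (Fin 3) (Fin 3) (DualNumber ℝ)) :=
  {A | A * Aᵀ = 1 ∧ A.det = 1}

/-- `SE(3, ℝ)`: rigid motions `x ↦ R x + t` with `R ∈ SO(3, ℝ)`. -/
def SE3 : Set ((Fin 3 → ℝ) → (Fin 3 → ℝ)) :=
  {f | ∃ (R : Matrix (Fin 3) (Fin 3) ℝ) (t : Fin 3 → ℝ),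
    R * Rᵀ = 1 ∧ R.det = 1 ∧ f = fun x => R.mulVec x + t}

/-- The map `Φ` sending `A = (I₃ + ε Ω_t)·R ∈ SO(3, ℝ[ε])` to the rigid motion
`x ↦ R x + t`: here `R` is the real part of `A` and `Ω_t = M·Rᵀ` where `M` is
the dual part of `A`. -/
noncomputable def Phi (A : Matrix (Fin 3) (Fin 3) (DualNumber ℝ)) :
    (Fin 3 → ℝ) → (Fin 3 → ℝ) :=
  fun x => (A.map (TrivSqZeroExt.fst : DualNumber ℝ → ℝ)).mulVec x +
    vecOf ((A.map (TrivSqZeroExt.snd : DualNumber ℝ → ℝ)) *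
      (A.map (TrivSqZeroExt.fst : DualNumber ℝ → ℝ))ᵀ)

section Aux

open TrivSqZeroExt

lemma re_mul (A B : Matrix (Fin 3) (Fin 3) (DualNumber ℝ)) :
    (A * B).map (fst : DualNumber ℝ → ℝ) = A.map fst * B.map fst := by
  ext i j
  simp [Matrix.map_apply, Matrix.mul_apply, fst_sum, fst_mul]

lemma du_mul (A B : Matrix (Fin 3) (Fin 3) (DualNumber ℝ)) :
    (A * B).map (snd : DualNumber ℝ → ℝ) =
      A.map fst * B.map snd + A.map snd * B.map fst := by
  ext i j
  simp [Matrix.map_apply, Matrix.mul_apply, snd_sum, DualNumber.snd_mul,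
    ← Finset.sum_add_distrib, smul_eq_mul, mul_comm, op_smul_eq_smul]

lemma re_one : (1 : Matrix (Fin 3) (Fin 3) (DualNumber ℝ)).map (fst : DualNumber ℝ → ℝ) = 1 :=
  Matrix.map_one _ fst_zero fst_one

lemma du_one : (1 : Matrix (Fin 3) (Fin 3) (DualNumber ℝ)).map (snd : DualNumber ℝ → ℝ) = 0 := by
  ext i j; simp [Matrix.map_apply, Matrix.one_apply, apply_ite (snd : DualNumber ℝ → ℝ)]

lemma re_transpose (A : Matrix (Fin 3) (Fin 3) (DualNumber ℝ)) :
    Aᵀ.map (fst : DualNumber ℝ → ℝ) = (A.map fst)ᵀ := rfl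

lemma du_transpose (A : Matrix (Fin 3) (Fin 3) (DualNumber ℝ)) :
    Aᵀ.map (snd : DualNumber ℝ → ℝ) = (A.map snd)ᵀ := rfl

lemma dual_mat_ext {A B : Matrix (Fin 3) (Fin 3) (DualNumber ℝ)}
    (h1 : A.map (fst : DualNumber ℝ → ℝ) = B.map fst)
    (h2 : A.map (snd : DualNumber ℝ → ℝ) = B.map snd) : A = B := by
  exact Matrix.ext fun i j =>
    TrivSqZeroExt.ext (congrFun (congrFun h1 i) j) (congrFun (congrFun h2 i) j)

lemma fst_det (A : Matrix (Fin 3) (Fin 3) (DualNumber ℝ)) :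
    fst A.det = (A.map (fst : DualNumber ℝ → ℝ)).det := by
  have h2 := (TrivSqZeroExt.fstHom ℝ ℝ ℝ).toRingHom.map_det A
  exact h2

lemma vecOf_Omega (t : Fin 3 → ℝ) : vecOf (Omega t) = t := by
  ext i; fin_cases i <;> simp [Omega, vecOf]

lemma Omega_skew (t : Fin 3 → ℝ) : Omega t + (Omega t)ᵀ = 0 := by
  refine Matrix.ext fun i j => ?_
  rw [Matrix.add_apply, Matrix.transpose_apply, Matrix.zero_apply]
  fin_cases i <;> fin_cases j <;> simp [Omega]

lemma Omega_vecOf {N : Matrix (Fin 3) (Fin 3) ℝ} (h : N + Nᵀ = 0) :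
    Omega (vecOf N) = N := by
  have h' : ∀ i j, N i j + N j i = 0 := fun i j => by
    have := congrFun (congrFun h i) j; simpa using this
  ext i j
  fin_cases i <;> fin_cases j <;>
    simp [Omega, vecOf] <;> linarith [h' 0 0, h' 1 1, h' 2 2, h' 0 1, h' 0 2, h' 1 2]

lemma vecOf_add (N N' : Matrix (Fin 3) (Fin 3) ℝ) :
    vecOf (N + N') = vecOf N + vecOf N' := by
  ext i; fin_cases i <;> simp [vecOf]

lemma rot (R : Matrix (Fin 3) (Fin 3) ℝ) (hR : R * Rᵀ = 1) (hd : R.det = 1) (t : Fin 3 → ℝ) :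
    R * Omega t * Rᵀ = Omega (R.mulVec t) := by
  have hadj : adjugate R = Rᵀ := by
    calc adjugate R = adjugate R * (R * Rᵀ) := by rw [hR, mul_one]
    _ = adjugate R * R * Rᵀ := by rw [mul_assoc]
    _ = Rᵀ := by rw [adjugate_mul, hd, one_smul, one_mul]
  rw [adjugate_fin_three] at hadj
  have e00 : R 1 1 * R 2 2 - R 1 2 * R 2 1 = R 0 0 := by
    have := congrFun (congrFun hadj 0) 0; simpa using this
  have e01 : -(R 0 1 * R 2 2) + R 0 2 * R 2 1 = R 1 0 := by
    have := congrFun (congrFun hadj 0) 1; simpa using this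
  have e02 : R 0 1 * R 1 2 - R 0 2 * R 1 1 = R 2 0 := by
    have := congrFun (congrFun hadj 0) 2; simpa using this
  have e10 : -(R 1 0 * R 2 2) + R 1 2 * R 2 0 = R 0 1 := by
    have := congrFun (congrFun hadj 1) 0; simpa using this
  have e11 : R 0 0 * R 2 2 - R 0 2 * R 2 0 = R 1 1 := by
    have := congrFun (congrFun hadj 1) 1; simpa using this
  have e12 : -(R 0 0 * R 1 2) + R 0 2 * R 1 0 = R 2 1 := by
    have := congrFun (congrFun hadj 1) 2; simpa using this
  have e20 : R 1 0 * R 2 1 - R 1 1 * R 2 0 = R 0 2 := by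
    have := congrFun (congrFun hadj 2) 0; simpa using this
  have e21 : -(R 0 0 * R 2 1) + R 0 1 * R 2 0 = R 1 2 := by
    have := congrFun (congrFun hadj 2) 1; simpa using this
  have e22 : R 0 0 * R 1 1 - R 0 1 * R 1 0 = R 2 2 := by
    have := congrFun (congrFun hadj 2) 2; simpa using this
  have hsk : R * Omega t * Rᵀ + (R * Omega t * Rᵀ)ᵀ = 0 := by
    have h1 : (R * Omega t * Rᵀ)ᵀ = R * (Omega t)ᵀ * Rᵀ := by
      rw [Matrix.transpose_mul, Matrix.transpose_mul, Matrix.transpose_transpose, mul_assoc]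
    rw [h1, ← Matrix.add_mul, ← Matrix.mul_add, Omega_skew t, Matrix.mul_zero, Matrix.zero_mul]
  rw [← Omega_vecOf hsk]
  have hv : vecOf (R * Omega t * Rᵀ) = R.mulVec t := by
    refine funext fun i => ?_
    fin_cases i <;>
      simp [vecOf, Omega, Matrix.mul_apply, Matrix.mulVec, dotProduct,
        Fin.sum_univ_three, Matrix.transpose_apply]
    · linear_combination t 0 * e00 + t 1 * e10 + t 2 * e20
    · linear_combination t 0 * e01 + t 1 * e11 + t 2 * e21
    · linear_combination t 0 * e02 + t 1 * e12 + t 2 * e22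
  rw [hv]

noncomputable def liftMat (R N : Matrix (Fin 3) (Fin 3) ℝ) :
    Matrix (Fin 3) (Fin 3) (DualNumber ℝ) :=
  R.map (TrivSqZeroExt.inl) + N.map (TrivSqZeroExt.inr)

lemma liftMat_fst (R N : Matrix (Fin 3) (Fin 3) ℝ) :
    (liftMat R N).map (fst : DualNumber ℝ → ℝ) = R := by
  ext i j; simp [liftMat, Matrix.map_apply, Matrix.add_apply]

lemma liftMat_snd (R N : Matrix (Fin 3) (Fin 3) ℝ) :
    (liftMat R N).map (snd : DualNumber ℝ → ℝ) = N := by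
  ext i j; simp [liftMat, Matrix.map_apply, Matrix.add_apply]

lemma det_construct (R : Matrix (Fin 3) (Fin 3) ℝ) (t : Fin 3 → ℝ) (hd : R.det = 1) :
    (liftMat R (Omega t * R)).det = 1 := by
  refine TrivSqZeroExt.ext ((fst_det _).trans ?_) (Eq.trans ?_ snd_one.symm)
  · rw [liftMat_fst, hd, fst_one]
  · rw [Matrix.det_fin_three]
    simp only [liftMat, Matrix.add_apply, Matrix.map_apply, DualNumber.snd_mul,
      TrivSqZeroExt.fst_mul, snd_add, fst_add, snd_sub, fst_sub, fst_inl, snd_inl, fst_inr,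
      snd_inr, Matrix.mul_apply, Fin.sum_univ_three, Omega]
    norm_num [Matrix.cons_val_zero, Matrix.cons_val_one, Matrix.cons_val, Matrix.cons_val_two, Matrix.tail_cons, Matrix.head_cons]
    ring

lemma so3_re {A : Matrix (Fin 3) (Fin 3) (DualNumber ℝ)} (hA : A ∈ SO3Dual) :
    A.map (fst : DualNumber ℝ → ℝ) * (A.map fst)ᵀ = 1 := by
  have h := congrArg
    (fun X : Matrix (Fin 3) (Fin 3) (DualNumber ℝ) => X.map (fst : DualNumber ℝ → ℝ)) hA.1
  simpa [re_mul, re_transpose, re_one] using h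

lemma so3_det {A : Matrix (Fin 3) (Fin 3) (DualNumber ℝ)} (hA : A ∈ SO3Dual) :
    (A.map (fst : DualNumber ℝ → ℝ)).det = 1 := by
  rw [← fst_det, hA.2, fst_one]

lemma so3_skew {A : Matrix (Fin 3) (Fin 3) (DualNumber ℝ)} (hA : A ∈ SO3Dual) :
    A.map (snd : DualNumber ℝ → ℝ) * (A.map fst)ᵀ
      + (A.map (snd : DualNumber ℝ → ℝ) * (A.map fst)ᵀ)ᵀ = 0 := by
  have h := congrArg
    (fun X : Matrix (Fin 3) (Fin 3) (DualNumber ℝ) => X.map (snd : DualNumber ℝ → ℝ)) hA.1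
  simp only [du_mul, du_transpose, re_transpose, du_one] at h
  rw [Matrix.transpose_mul, Matrix.transpose_transpose]
  rw [add_comm] at h
  exact h

end Aux

/-- `Φ : SO(3, ℝ[ε]) → SE(3, ℝ)`, `(I₃ + ε Ω_t)·R ↦ (x ↦ R x + t)`, is a group
isomorphism: it is a bijection of `SO(3, ℝ[ε])` onto `SE(3, ℝ)` sending products
to composition of rigid motions. -/
theorem stmt2 :
    Set.BijOn Phi SO3Dual SE3 ∧
    ∀ A ∈ SO3Dual, ∀ B ∈ SO3Dual, Phi (A * B) = Phi A ∘ Phi B := by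
  open TrivSqZeroExt in
  constructor
  · refine ⟨?_, ?_, ?_⟩
    · -- MapsTo
      intro A hA
      exact ⟨A.map fst, vecOf (A.map snd * (A.map fst)ᵀ), so3_re hA, so3_det hA, rfl⟩
    · -- InjOn
      intro A hA B hB h
      have ht : vecOf (A.map (snd : DualNumber ℝ → ℝ) * (A.map fst)ᵀ)
          = vecOf (B.map (snd : DualNumber ℝ → ℝ) * (B.map fst)ᵀ) := by
        have := congrFun h 0
        simpa [Phi, Matrix.mulVec_zero] using this
      have hmv : ∀ x, (A.map (fst : DualNumber ℝ → ℝ)).mulVec x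
          = (B.map (fst : DualNumber ℝ → ℝ)).mulVec x := by
        intro x
        have hx := congrFun h x
        simp only [Phi, ht] at hx
        exact add_right_cancel hx
      have hR : A.map (fst : DualNumber ℝ → ℝ) = B.map fst := by
        refine Matrix.ext fun i j => ?_
        have := congrFun (hmv (Pi.single j 1)) i
        rwa [Matrix.mulVec_single_one, Matrix.mulVec_single_one] at this
      have hN : A.map (snd : DualNumber ℝ → ℝ) * (A.map fst)ᵀ
          = B.map (snd : DualNumber ℝ → ℝ) * (B.map fst)ᵀ := by
        rw [← Omega_vecOf (so3_skew hA), ← Omega_vecOf (so3_skew hB), ht]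
      have hTR : (A.map (fst : DualNumber ℝ → ℝ))ᵀ * A.map fst = 1 :=
        mul_eq_one_comm.mp (so3_re hA)
      have hM : A.map (snd : DualNumber ℝ → ℝ) = B.map snd := by
        calc A.map (snd : DualNumber ℝ → ℝ)
            = A.map (snd : DualNumber ℝ → ℝ) * ((A.map fst)ᵀ * A.map fst) := by
              rw [hTR, mul_one]
          _ = (A.map (snd : DualNumber ℝ → ℝ) * (A.map fst)ᵀ) * A.map fst := by
              rw [mul_assoc]
          _ = (B.map (snd : DualNumber ℝ → ℝ) * (B.map fst)ᵀ) * B.map fst := by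
              rw [hN, hR]
          _ = B.map (snd : DualNumber ℝ → ℝ) * ((B.map fst)ᵀ * B.map fst) := by
              rw [mul_assoc]
          _ = B.map (snd : DualNumber ℝ → ℝ) := by
              rw [mul_eq_one_comm.mp (so3_re hB), mul_one]
      exact dual_mat_ext hR hM
    · -- SurjOn
      rintro f ⟨R, t, hRR, hdet, rfl⟩
      refine ⟨liftMat R (Omega t * R), ⟨?_, det_construct R t hdet⟩, ?_⟩
      · apply dual_mat_ext
        · rw [re_mul, re_transpose, liftMat_fst, re_one, hRR]
        · rw [du_mul, du_transpose, re_transpose, liftMat_fst, liftMat_snd, du_one,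
            Matrix.transpose_mul, ← Matrix.mul_assoc R Rᵀ, hRR, Matrix.one_mul,
            Matrix.mul_assoc (Omega t), hRR, Matrix.mul_one, add_comm]
          exact Omega_skew t
      · funext x
        show (liftMat R (Omega t * R) |>.map fst).mulVec x
            + vecOf ((liftMat R (Omega t * R)).map snd
              * ((liftMat R (Omega t * R)).map fst)ᵀ) = R.mulVec x + t
        rw [liftMat_fst, liftMat_snd, Matrix.mul_assoc, hRR, Matrix.mul_one, vecOf_Omega]
  · -- homomorphism
    intro A hA B hB
    funext x
    show ((A * B).map fst).mulVec x + vecOf ((A * B).map snd * ((A * B).map fst)ᵀ)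
        = Phi A (Phi B x)
    rw [re_mul, du_mul]
    have key : (A.map (fst : DualNumber ℝ → ℝ) * B.map snd + A.map snd * B.map fst)
        * (A.map (fst : DualNumber ℝ → ℝ) * B.map fst)ᵀ
        = A.map fst * (B.map (snd : DualNumber ℝ → ℝ) * (B.map fst)ᵀ) * (A.map fst)ᵀ
          + A.map snd * (A.map fst)ᵀ := by
      rw [Matrix.transpose_mul, Matrix.add_mul]
      congr 1
      · simp only [Matrix.mul_assoc]
      · calc A.map (snd : DualNumber ℝ → ℝ) * B.map fst * ((B.map fst)ᵀ * (A.map fst)ᵀ)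
            = A.map (snd : DualNumber ℝ → ℝ)
              * (B.map fst * (B.map fst)ᵀ * (A.map fst)ᵀ) := by simp only [Matrix.mul_assoc]
          _ = A.map (snd : DualNumber ℝ → ℝ) * (A.map fst)ᵀ := by
              rw [so3_re hB, Matrix.one_mul]
    rw [key, vecOf_add]
    have hOB : B.map (snd : DualNumber ℝ → ℝ) * (B.map fst)ᵀ
        = Omega (vecOf (B.map (snd : DualNumber ℝ → ℝ) * (B.map fst)ᵀ)) :=
      (Omega_vecOf (so3_skew hB)).symm
    rw [hOB, rot _ (so3_re hA) (so3_det hA), vecOf_Omega]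
    show _ = (A.map (fst : DualNumber ℝ → ℝ)).mulVec ((B.map fst).mulVec x
        + vecOf (B.map snd * (B.map fst)ᵀ)) + vecOf (A.map snd * (A.map fst)ᵀ)
    rw [Matrix.mulVec_add, Matrix.mulVec_mulVec]
    abel
end

section
/- The map σ: ℙ³(ℝ) × ℙ³(ℝ) → ℙ⁷(ℝ) × ℙ³(ℝ), ([w],[r,s,t,u]) ↦ ([x,y],[w]) with xᵢ = wᵢ r and 2y₀ = −w₁s − w₂t − w₃u, 2y₁ = w₀s + w₃t − w₂u, 2y₂ = −w₃s + w₀t + w₁u, 2y₃ = w₂s − w₁t + w₀u, is well-defined (i.e. (x,y) never vanishes identically) and its image lies in Bl_E(S). -/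
/-- The defining conditions of `Bl_E(S) ⊂ ℙ⁷(ℝ) × ℙ³(ℝ)`, on homogeneous coordinates. -/
def inBl (x y w : Fin 4 → ℝ) : Prop :=
  (∑ i : Fin 4, x i * y i = 0) ∧ (∑ i : Fin 4, y i * w i = 0) ∧
    ∀ i j : Fin 4, x i * w j = x j * w i

/-- The `x`-part of `σ([w], [r,s,t,u])`: `xᵢ = wᵢ r`. -/
def sigmaX (w p : Fin 4 → ℝ) : Fin 4 → ℝ := fun i => w i * p 0

/-- The `y`-part of `σ([w], [r,s,t,u])`. -/
noncomputable def sigmaY (w p : Fin 4 → ℝ) : Fin 4 → ℝ :=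
  ![(-(w 1 * p 1) - w 2 * p 2 - w 3 * p 3) / 2,
    (w 0 * p 1 + w 3 * p 2 - w 2 * p 3) / 2,
    (-(w 3 * p 1) + w 0 * p 2 + w 1 * p 3) / 2,
    (w 2 * p 1 - w 1 * p 2 + w 0 * p 3) / 2]

/-- `σ` is well-defined (the image homogeneous coordinates `(x, y)` never all vanish)
and its image lies in `Bl_E(S)`. -/
theorem stmt15 (w p : Fin 4 → ℝ) (hw : w ≠ 0) (hp : p ≠ 0) :
    ¬(sigmaX w p = 0 ∧ sigmaY w p = 0) ∧ inBl (sigmaX w p) (sigmaY w p) w := by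
  have hwsq : 0 < w 0 ^ 2 + w 1 ^ 2 + w 2 ^ 2 + w 3 ^ 2 := by
    by_contra h
    push_neg at h
    apply hw
    funext i
    have h0 : w 0 = 0 := by nlinarith [sq_nonneg (w 0), sq_nonneg (w 1), sq_nonneg (w 2), sq_nonneg (w 3)]
    have h1 : w 1 = 0 := by nlinarith [sq_nonneg (w 0), sq_nonneg (w 1), sq_nonneg (w 2), sq_nonneg (w 3)]
    have h2 : w 2 = 0 := by nlinarith [sq_nonneg (w 0), sq_nonneg (w 1), sq_nonneg (w 2), sq_nonneg (w 3)]
    have h3 : w 3 = 0 := by nlinarith [sq_nonneg (w 0), sq_nonneg (w 1), sq_nonneg (w 2), sq_nonneg (w 3)]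
    fin_cases i <;> assumption
  refine ⟨?_, ?_, ?_, ?_⟩
  · rintro ⟨hx, hy⟩
    have hx0 := congrFun hx 0
    have hx1 := congrFun hx 1
    have hx2 := congrFun hx 2
    have hx3 := congrFun hx 3
    have hy0 := congrFun hy 0
    have hy1 := congrFun hy 1
    have hy2 := congrFun hy 2
    have hy3 := congrFun hy 3
    simp only [sigmaX, sigmaY, Pi.zero_apply] at hx0 hx1 hx2 hx3 hy0 hy1 hy2 hy3
    norm_num [Matrix.cons_val_zero, Matrix.cons_val_one, Matrix.head_cons, Matrix.cons_val_two, Matrix.tail_cons, Matrix.cons_val_three, div_eq_zero_iff] at hy0 hy1 hy2 hy3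
    have hp0sq : (w 0 ^ 2 + w 1 ^ 2 + w 2 ^ 2 + w 3 ^ 2) * p 0 ^ 2 = 0 := by
      linear_combination (w 0 * p 0) * hx0 + (w 1 * p 0) * hx1 + (w 2 * p 0) * hx2 + (w 3 * p 0) * hx3
    have hp0 : p 0 = 0 := by
      rcases mul_eq_zero.mp hp0sq with h | h
      · linarith
      · exact pow_eq_zero_iff (by norm_num) |>.mp h
    have hsum : (w 0 ^ 2 + w 1 ^ 2 + w 2 ^ 2 + w 3 ^ 2) * (p 1 ^ 2 + p 2 ^ 2 + p 3 ^ 2) = 0 := by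
      linear_combination (-(w 1 * p 1) - w 2 * p 2 - w 3 * p 3) * hy0 + (w 0 * p 1 + w 3 * p 2 - w 2 * p 3) * hy1 + (-(w 3 * p 1) + w 0 * p 2 + w 1 * p 3) * hy2 + (w 2 * p 1 - w 1 * p 2 + w 0 * p 3) * hy3
    have hps : p 1 ^ 2 + p 2 ^ 2 + p 3 ^ 2 = 0 := by
      rcases mul_eq_zero.mp hsum with h | h
      · linarith
      · exact h
    clear hx hy hx0 hx1 hx2 hx3 hy0 hy1 hy2 hy3 hp0sq hsum hw hwsq
    have h1 : p 1 = 0 := by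
      have : p 1 ^ 2 = 0 := by linarith [sq_nonneg (p 1), sq_nonneg (p 2), sq_nonneg (p 3)]
      exact pow_eq_zero_iff (by norm_num) |>.mp this
    have h2 : p 2 = 0 := by
      have : p 2 ^ 2 = 0 := by linarith [sq_nonneg (p 1), sq_nonneg (p 2), sq_nonneg (p 3)]
      exact pow_eq_zero_iff (by norm_num) |>.mp this
    have h3 : p 3 = 0 := by
      have : p 3 ^ 2 = 0 := by linarith [sq_nonneg (p 1), sq_nonneg (p 2), sq_nonneg (p 3)]
      exact pow_eq_zero_iff (by norm_num) |>.mp this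
    apply hp
    funext i
    fin_cases i
    · exact hp0
    · exact h1
    · exact h2
    · exact h3
  · simp [Fin.sum_univ_four, sigmaX, sigmaY]; ring
  · simp [Fin.sum_univ_four, sigmaX, sigmaY]; ring
  · intro i j; simp [sigmaX]; ring
end

section
/- The maps σ and τ are mutually inverse, giving a biregular isomorphism between ℙ³(ℝ) × ℙ³(ℝ) and Bl_E(S): τ∘σ = id on ℙ³(ℝ)×ℙ³(ℝ) and σ∘τ = id on Bl_E(S). -/
/-- The quadruple `(r, s, t, u)` of `τ([x, y], [w])`. -/
def tauP (x y w : Fin 4 → ℝ) : Fin 4 → ℝ :=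
  ![w 0 * x 0 + w 1 * x 1 + w 2 * x 2 + w 3 * x 3,
    2 * (-(w 1 * y 0) + w 0 * y 1 - w 3 * y 2 + w 2 * y 3),
    2 * (-(w 2 * y 0) + w 3 * y 1 + w 0 * y 2 - w 1 * y 3),
    2 * (-(w 3 * y 0) - w 2 * y 1 + w 1 * y 2 + w 0 * y 3)]

lemma funext4 {f g : Fin 4 → ℝ} (h0 : f 0 = g 0) (h1 : f 1 = g 1) (h2 : f 2 = g 2)
    (h3 : f 3 = g 3) : f = g := by
  funext i; fin_cases i <;> assumption

lemma sumsq_ne (w : Fin 4 → ℝ) (hw : w ≠ 0) :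
    w 0 * w 0 + w 1 * w 1 + w 2 * w 2 + w 3 * w 3 ≠ 0 := by
  obtain ⟨i, hi⟩ : ∃ i, w i ≠ 0 := by
    by_contra h; push_neg at h; exact hw (funext h)
  have h1 := Finset.single_le_sum (f := fun j => w j * w j)
    (fun j _ => mul_self_nonneg (w j)) (Finset.mem_univ i)
  rw [Fin.sum_univ_four] at h1
  nlinarith [mul_self_pos.2 hi]

/-- `σ` and `τ` are mutually inverse as maps of projective varieties:
`τ ∘ σ` is the identity of `ℙ³(ℝ) × ℙ³(ℝ)` and `σ ∘ τ` is the identity of `Bl_E(S)`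
(equalities of homogeneous coordinates up to a nonzero scalar; the `[w]`-components are
untouched by both maps). -/
theorem stmt17 :
    (∀ w p : Fin 4 → ℝ, w ≠ 0 → p ≠ 0 →
      ∃ c : ℝ, c ≠ 0 ∧ tauP (sigmaX w p) (sigmaY w p) w = c • p) ∧
    (∀ x y w : Fin 4 → ℝ, inBl x y w → ¬(x = 0 ∧ y = 0) → w ≠ 0 →
      ∃ c : ℝ, c ≠ 0 ∧ sigmaX w (tauP x y w) = c • x ∧ sigmaY w (tauP x y w) = c • y) := by
  constructor
  · intro w p hw _
    refine ⟨w 0 * w 0 + w 1 * w 1 + w 2 * w 2 + w 3 * w 3, sumsq_ne w hw, ?_⟩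
    refine funext4 ?_ ?_ ?_ ?_ <;>
      simp [tauP, sigmaX, sigmaY, Fin.isValue] <;> ring
  · rintro x y w ⟨_, h2, h3⟩ _ hw
    rw [Fin.sum_univ_four] at h2
    refine ⟨w 0 * w 0 + w 1 * w 1 + w 2 * w 2 + w 3 * w 3, sumsq_ne w hw, ?_, ?_⟩
    · refine funext4 ?_ ?_ ?_ ?_ <;>
        simp only [sigmaX, tauP, Pi.smul_apply, smul_eq_mul, Matrix.cons_val_zero]
      · linear_combination w 1 * h3 1 0 + w 2 * h3 2 0 + w 3 * h3 3 0
      · linear_combination w 0 * h3 0 1 + w 2 * h3 2 1 + w 3 * h3 3 1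
      · linear_combination w 0 * h3 0 2 + w 1 * h3 1 2 + w 3 * h3 3 2
      · linear_combination w 0 * h3 0 3 + w 1 * h3 1 3 + w 2 * h3 2 3
    · refine funext4 ?_ ?_ ?_ ?_ <;>
        simp [sigmaY, tauP, Fin.isValue]
      · linear_combination (-(w 0)) * h2
      · linear_combination (-(w 1)) * h2
      · linear_combination (-(w 2)) * h2
      · linear_combination (-(w 3)) * h2
end
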